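/- Let D be a column diagram consisting of m boxes in rows each of length 2, where the first column is filled with m distinct positive integers (the left entries), and let S be a set of m positive integers. Then there is exactly one way to fill the second column with the elements of S (each used once) such that for every pair of rows r < r' the type-A triple condition is satisfied, i.e., the resulting filling has no coinversions. Concretely: a filling assigns to each row i a value F(i) ∈ S bijectively, and a coinversion is a pair of rows i < j such that NOT (the entries a = left entry of row i, b = F(i), c = F(j), ordered with ties broken by position, form a counter-clockwise orientation); equivalently, the triple (a,b,c) with a immediately left of b and c below b is a coinversion unless exactly: (c < b ≤ a) or (b ≤ a < c) or (a < c < b). The claim is that there is a unique bijection F : rows → S avoiding all coinversions. -/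
import Mathlib

def pick (a : ℕ) (T : Finset ℕ) : ℕ :=
  if h : (T.filter (· ≤ a)).Nonempty then (T.filter (· ≤ a)).max' h
  else if h2 : T.Nonempty then T.max' h2 else 0

lemma pick_eq_of_pos (a : ℕ) {T : Finset ℕ} (h : (T.filter (· ≤ a)).Nonempty) :
    pick a T = (T.filter (· ≤ a)).max' h := by
  unfold pick; rw [dif_pos h]

lemma pick_eq_of_neg (a : ℕ) {T : Finset ℕ} (h : ¬ (T.filter (· ≤ a)).Nonempty)
    (hT : T.Nonempty) : pick a T = T.max' hT := by
  unfold pick; rw [dif_neg h, dif_pos hT]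

lemma pick_mem (a : ℕ) {T : Finset ℕ} (hT : T.Nonempty) : pick a T ∈ T := by
  by_cases h : (T.filter (· ≤ a)).Nonempty
  · rw [pick_eq_of_pos a h]
    exact (Finset.mem_filter.mp (Finset.max'_mem _ h)).1
  · rw [pick_eq_of_neg a h hT]
    exact T.max'_mem hT

lemma pick_good (a : ℕ) {T : Finset ℕ} {c : ℕ} (hc : c ∈ T) (hne : c ≠ pick a T) :
    (c < pick a T ∧ pick a T ≤ a) ∨ (pick a T ≤ a ∧ a < c) ∨ (a < c ∧ c < pick a T) := by
  have hT : T.Nonempty := ⟨c, hc⟩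
  by_cases h : (T.filter (· ≤ a)).Nonempty
  · rw [pick_eq_of_pos a h] at hne ⊢
    have hba : (T.filter (· ≤ a)).max' h ≤ a :=
      (Finset.mem_filter.mp (Finset.max'_mem _ h)).2
    by_cases hca : c ≤ a
    · left
      have hcf : c ∈ T.filter (· ≤ a) := Finset.mem_filter.mpr ⟨hc, hca⟩
      exact ⟨lt_of_le_of_ne (Finset.le_max' (T.filter (· ≤ a)) c hcf) hne, hba⟩
    · right; left; exact ⟨hba, lt_of_not_ge hca⟩
  · rw [pick_eq_of_neg a h hT] at hne ⊢
    have hac : a < c := by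
      by_contra hle
      exact h ⟨c, Finset.mem_filter.mpr ⟨hc, le_of_not_gt hle⟩⟩
    right; right; exact ⟨hac, lt_of_le_of_ne (Finset.le_max' _ c hc) hne⟩

lemma pick_unique (a : ℕ) {T : Finset ℕ} {b : ℕ} (hb : b ∈ T)
    (hgood : ∀ c ∈ T, c ≠ b →
      (c < b ∧ b ≤ a) ∨ (b ≤ a ∧ a < c) ∨ (a < c ∧ c < b)) :
    b = pick a T := by
  unfold pick
  by_cases hba : b ≤ a
  · have hbf : b ∈ T.filter (· ≤ a) := Finset.mem_filter.mpr ⟨hb, hba⟩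
    rw [dif_pos ⟨b, hbf⟩]
    refine le_antisymm (Finset.le_max' _ b hbf) (Finset.max'_le _ _ _ ?_)
    intro c hcf
    obtain ⟨hcT, hca⟩ := Finset.mem_filter.mp hcf
    by_cases hcb : c = b
    · exact hcb.le
    · rcases hgood c hcT hcb with h | h | h <;> omega
  · have hfe : ¬ (T.filter (· ≤ a)).Nonempty := by
      rintro ⟨c, hcf⟩
      obtain ⟨hcT, hca⟩ := Finset.mem_filter.mp hcf
      have hcb : c ≠ b := by omega
      rcases hgood c hcT hcb with h | h | h <;> omega
    rw [dif_neg hfe, dif_pos ⟨b, hb⟩]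
    refine le_antisymm (Finset.le_max' _ b hb) (Finset.max'_le _ _ _ ?_)
    intro c hcT
    by_cases hcb : c = b
    · exact hcb.le
    · rcases hgood c hcT hcb with h | h | h <;> omega

theorem aux_unique_column : ∀ (m : ℕ) (L : Fin m → ℕ) (S : Finset ℕ), S.card = m →
    ∃! F : Fin m → ℕ,
      Set.BijOn F Set.univ (S : Set ℕ) ∧
      ∀ i j : Fin m, i < j →
        ((F j < F i ∧ F i ≤ L i) ∨ (F i ≤ L i ∧ L i < F j) ∨ (L i < F j ∧ F j < F i))
  | 0, L, S, hS => by
    have hSe : S = ∅ := Finset.card_eq_zero.mp hS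
    subst hSe
    have huniv : (Set.univ : Set (Fin 0)) = ∅ := by
      simp [Set.eq_empty_of_isEmpty]
    refine ⟨fun _ => 0, ⟨?_, fun i => i.elim0⟩, fun F _ => funext fun i => i.elim0⟩
    rw [huniv]
    simpa using Set.bijOn_empty (fun _ : Fin 0 => (0 : ℕ))
  | m + 1, L, S, hS => by
    have hSne : S.Nonempty := by rw [← Finset.card_pos, hS]; omega
    set a := L 0 with ha
    set b := pick a S with hbdef
    have hbS : b ∈ S := pick_mem a hSne
    have hS' : (S.erase b).card = m := by rw [Finset.card_erase_of_mem hbS, hS]; omega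
    obtain ⟨G, ⟨hGbij, hGcond⟩, hGuniq⟩ :=
      aux_unique_column m (fun i => L i.succ) (S.erase b) hS'
    have hGmem : ∀ k, G k ∈ S.erase b := fun k =>
      Finset.mem_coe.mp (hGbij.mapsTo (Set.mem_univ k))
    refine ⟨Fin.cases b G, ⟨⟨?_, ?_, ?_⟩, ?_⟩, ?_⟩
    · -- MapsTo
      intro i _
      refine Fin.cases ?_ ?_ i
      · simpa using hbS
      · intro k
        simp only [Fin.cases_succ]
        exact Finset.mem_coe.mpr (Finset.mem_of_mem_erase (hGmem k))
    · -- InjOn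
      intro i _ j _ hij
      rcases Fin.eq_zero_or_eq_succ i with rfl | ⟨i', rfl⟩ <;>
        rcases Fin.eq_zero_or_eq_succ j with rfl | ⟨j', rfl⟩
      · rfl
      · simp only [Fin.cases_zero, Fin.cases_succ] at hij
        exact absurd hij.symm (Finset.ne_of_mem_erase (hGmem j'))
      · simp only [Fin.cases_zero, Fin.cases_succ] at hij
        exact absurd hij (Finset.ne_of_mem_erase (hGmem i'))
      · simp only [Fin.cases_succ] at hij
        exact congrArg Fin.succ (hGbij.injOn (Set.mem_univ i') (Set.mem_univ j') hij)
    · -- SurjOn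
      intro x hx
      by_cases hxb : x = b
      · exact ⟨0, Set.mem_univ 0, by simp [hxb]⟩
      · have hx' : x ∈ (↑(S.erase b) : Set ℕ) :=
          Finset.mem_coe.mpr (Finset.mem_erase.mpr ⟨hxb, Finset.mem_coe.mp hx⟩)
        obtain ⟨k, _, hk⟩ := hGbij.surjOn hx'
        exact ⟨k.succ, Set.mem_univ _, by simpa using hk⟩
    · -- condition
      intro i j hij
      rcases Fin.eq_zero_or_eq_succ i with rfl | ⟨i', rfl⟩
      · rcases Fin.eq_zero_or_eq_succ j with rfl | ⟨j', rfl⟩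
        · exact absurd hij (lt_irrefl 0)
        · simp only [Fin.cases_zero, Fin.cases_succ]
          exact pick_good a (Finset.mem_of_mem_erase (hGmem j'))
            (Finset.ne_of_mem_erase (hGmem j'))
      · rcases Fin.eq_zero_or_eq_succ j with rfl | ⟨j', rfl⟩
        · exact absurd hij (by simp [Fin.lt_iff_val_lt_val])
        · simp only [Fin.cases_succ]
          exact hGcond i' j' (by simpa [Fin.succ_lt_succ_iff] using hij)
    · -- uniqueness
      rintro F ⟨hFbij, hFcond⟩
      have hF0S : F 0 ∈ S := Finset.mem_coe.mp (hFbij.mapsTo (Set.mem_univ 0))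
      have hF0 : F 0 = b := by
        rw [hbdef]
        apply pick_unique a hF0S
        intro c hc hcne
        obtain ⟨j, _, hj⟩ := hFbij.surjOn (Finset.mem_coe.mpr hc)
        have hj0 : j ≠ 0 := by rintro rfl; exact hcne hj.symm
        have h0j : (0 : Fin (m + 1)) < j := Fin.pos_of_ne_zero hj0
        have := hFcond 0 j h0j
        rw [hj] at this
        exact this
      have hG' : (fun k : Fin m => F k.succ) = G := by
        apply hGuniq
        constructor
        · refine ⟨?_, ?_, ?_⟩
          · intro k _
            refine Finset.mem_coe.mpr (Finset.mem_erase.mpr ⟨?_, ?_⟩)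
            · rw [← hF0]
              intro h
              have := hFbij.injOn (Set.mem_univ k.succ) (Set.mem_univ 0) h
              exact (Fin.succ_ne_zero k) this
            · exact Finset.mem_coe.mp (hFbij.mapsTo (Set.mem_univ k.succ))
          · intro i _ j _ hij
            exact Fin.succ_injective m
              (hFbij.injOn (Set.mem_univ i.succ) (Set.mem_univ j.succ) hij)
          · intro x hx
            have hxS : x ∈ S := Finset.mem_of_mem_erase (Finset.mem_coe.mp hx)
            have hxb : x ≠ b := Finset.ne_of_mem_erase (Finset.mem_coe.mp hx)
            obtain ⟨j, _, hj⟩ := hFbij.surjOn (Finset.mem_coe.mpr hxS)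
            have hj0 : j ≠ 0 := by
              rintro rfl; exact hxb (by rw [← hj, hF0])
            obtain ⟨j', hj'⟩ := Fin.eq_succ_of_ne_zero hj0
            exact ⟨j', Set.mem_univ _, by show F j'.succ = x; rw [← hj']; exact hj⟩
        · intro i j hij
          exact hFcond i.succ j.succ (by simpa [Fin.succ_lt_succ_iff] using hij)
      funext i
      refine Fin.cases ?_ ?_ i
      · simpa using hF0
      · intro k
        simp only [Fin.cases_succ]
        rw [← hG']

/-- unique coinversion-free filling of the second column. -/
theorem unique_coinversion_free_column (m : ℕ) (L : Fin m → ℕ)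
    (hLpos : ∀ i, 0 < L i) (hLinj : Function.Injective L)
    (S : Finset ℕ) (hScard : S.card = m) (hSpos : ∀ x ∈ S, 0 < x) :
    ∃! F : Fin m → ℕ,
      Set.BijOn F Set.univ (S : Set ℕ) ∧
      ∀ i j : Fin m, i < j →
        ((F j < F i ∧ F i ≤ L i) ∨ (F i ≤ L i ∧ L i < F j) ∨ (L i < F j ∧ F j < F i)) :=
  aux_unique_column m L S hScard
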